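/- Let G be a finite Cpo-group of order 55 and let H be a finite Cpo-group of order 22. Then |Cent(G)| = |Cent(H)| = 13, the commutator subgroups satisfy |G'| = |H'| = 11, and the central quotients G/Z(G) and H/Z(H) are not isomorphic (so G and H are not isoclinic). -/

import Mathlib

/-- A group `G` is a Cpo-group if the centralizer of every non-trivial element
has prime order. -/
def IsCpoGroup (G : Type*) [Group G] : Prop :=
  ∀ x : G, x ≠ 1 → (Nat.card (Subgroup.centralizer ({x} : Set G))).Prime

/-- The number of distinct element centralizers of a group. -/
noncomputable def numCent (G : Type*) [Group G] : ℕ :=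
  Set.ncard {H : Subgroup G | ∃ x : G, H = Subgroup.centralizer ({x} : Set G)}

section Aux

variable {K : Type*} [Group K] [Finite K]

open Subgroup

/-- A subgroup of prime order containing a nontrivial element `x` equals `zpowers x`. -/
lemma aux_eq_zpowers_of_prime_card {C : Subgroup K} (hC : (Nat.card C).Prime)
    {x : K} (hx : x ≠ 1) (hxC : x ∈ C) : C = Subgroup.zpowers x := by
  have hle : Subgroup.zpowers x ≤ C := (Subgroup.zpowers_le).mpr hxC
  have hdvd : Nat.card (Subgroup.zpowers x) ∣ Nat.card C := Subgroup.card_dvd_of_le hle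
  have hne : Nat.card (Subgroup.zpowers x) ≠ 1 := by
    rw [Nat.card_zpowers]
    simpa [orderOf_eq_one_iff] using hx
  have := (Nat.Prime.eq_one_or_self_of_dvd hC _ hdvd).resolve_left hne
  exact (Subgroup.eq_of_le_of_card_ge hle this.ge).symm

/-- In a Cpo group, the centralizer of a nontrivial element is the cyclic group it generates. -/
lemma aux_centralizer_eq_zpowers (hK : IsCpoGroup K) {x : K} (hx : x ≠ 1) :
    Subgroup.centralizer ({x} : Set K) = Subgroup.zpowers x :=
  aux_eq_zpowers_of_prime_card (hK x hx) hx
    (Subgroup.mem_centralizer_iff.mpr (by simp))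

lemma aux_orderOf_prime (hK : IsCpoGroup K) {x : K} (hx : x ≠ 1) : (orderOf x).Prime := by
  have := hK x hx
  rwa [aux_centralizer_eq_zpowers hK hx, Nat.card_zpowers] at this

/-- Uniqueness of the subgroup of order 11 in a group of order `11 * q` with `q < 11` prime. -/
lemma aux_unique_card11 (q : ℕ) (hq : q.Prime) (hlt : q < 11)
    (hcard : Nat.card K = 11 * q) {P Q : Subgroup K}
    (hP : Nat.card P = 11) (hQ : Nat.card Q = 11) : P = Q := by
  have h11 : Fact (Nat.Prime 11) := ⟨by norm_num⟩
  have hq0 : q ≠ 0 := hq.pos.ne'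
  -- indices
  have hPi : P.index = q := by
    have := Subgroup.card_mul_index P
    rw [hP, hcard] at this
    omega
  have hQi : Q.index = q := by
    have := Subgroup.card_mul_index Q
    rw [hQ, hcard] at this
    omega
  have hnd : ¬ (11 ∣ q) := by
    intro h
    have := Nat.le_of_dvd hq.pos h
    omega
  have hPp : IsPGroup 11 P := IsPGroup.of_card (by rw [hP, pow_one])
  have hQp : IsPGroup 11 Q := IsPGroup.of_card (by rw [hQ, pow_one])
  have PS : Sylow 11 K := hPp.toSylow (by rwa [hPi])
  -- count Sylow subgroups
  have hsub : Subsingleton (Sylow 11 K) := by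
    have hdvd : Nat.card (Sylow 11 K) ∣ (hPp.toSylow (by rwa [hPi]) : Sylow 11 K).index :=
      Sylow.card_dvd_index _
    have hidx : (hPp.toSylow (show ¬ (11:ℕ) ∣ P.index by rwa [hPi]) : Sylow 11 K).index = q := by
      show Subgroup.index _ = q
      rw [IsPGroup.toSylow_coe]; exact hPi
    rw [hidx] at hdvd
    have hmod : Nat.card (Sylow 11 K) ≡ 1 [MOD 11] := card_sylow_modEq_one 11 K
    have h1 : Nat.card (Sylow 11 K) = 1 ∨ Nat.card (Sylow 11 K) = q :=
      (Nat.Prime.eq_one_or_self_of_dvd hq _ hdvd).imp id id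
    have : Nat.card (Sylow 11 K) = 1 := by
      rcases h1 with h | h
      · exact h
      · exfalso
        rw [h] at hmod
        have : q % 11 = 1 % 11 := hmod
        have h2 := hq.two_le
        omega
    exact (Nat.card_eq_one_iff_unique.mp this).1
  have : (hPp.toSylow (show ¬ (11:ℕ) ∣ P.index by rwa [hPi]) : Sylow 11 K)
      = (hQp.toSylow (show ¬ (11:ℕ) ∣ Q.index by rwa [hQi]) : Sylow 11 K) :=
    Subsingleton.elim _ _
  have := congrArg (Sylow.toSubgroup) this
  rwa [IsPGroup.toSylow_coe, IsPGroup.toSylow_coe] at this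

/-- The main structural lemma for finite Cpo-groups of order `11 * q`, `q < 11` prime. -/
lemma aux_main (K : Type*) [Group K] [Finite K] (hK : IsCpoGroup K)
    (q : ℕ) (hq : q.Prime) (hlt : q < 11) (hcard : Nat.card K = 11 * q) :
    numCent K = 13 ∧ Nat.card (commutator K) = 11 ∧ Subgroup.center K = ⊥ := by
  classical
  have := Fintype.ofFinite K
  have h11 : Fact (Nat.Prime 11) := ⟨by norm_num⟩
  have hq2 : 2 ≤ q := hq.two_le
  have hnotp : ¬ (Nat.card K).Prime := by
    rw [hcard]
    intro h
    rcases (Nat.Prime.eq_one_or_self_of_dvd h 11 ⟨q, rfl⟩) with h' | h' <;> omega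
  -- center is trivial
  have hcenter : Subgroup.center K = ⊥ := by
    rw [eq_bot_iff]
    intro z hz
    by_contra hz1
    have hz1' : z ≠ 1 := by simpa [Subgroup.mem_bot] using hz1
    have : Subgroup.centralizer ({z} : Set K) = ⊤ :=
      Subgroup.centralizer_eq_top_iff_subset.mpr (by simpa using hz)
    have hp := hK z hz1'
    rw [this, Subgroup.card_top] at hp
    exact hnotp hp
  -- every nontrivial element has prime order 11 or q
  have horder : ∀ x : K, x ≠ 1 → orderOf x = 11 ∨ orderOf x = q := by
    intro x hx
    have hp := aux_orderOf_prime hK hx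
    have hdvd : orderOf x ∣ Nat.card K := orderOf_dvd_natCard x
    rw [hcard] at hdvd
    rcases (Nat.Prime.dvd_mul hp).mp hdvd with h | h
    · left; exact (Nat.prime_dvd_prime_iff_eq hp (by norm_num)).mp h
    · right; exact (Nat.prime_dvd_prime_iff_eq hp hq).mp h
  -- an element of order 11
  obtain ⟨x₀, hx₀⟩ : ∃ x : K, orderOf x = 11 := by
    apply exists_prime_orderOf_dvd_card 11
    rw [← Nat.card_eq_fintype_card, hcard]
    exact ⟨q, rfl⟩
  set P : Subgroup K := Subgroup.zpowers x₀ with hPdef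
  have hPcard : Nat.card P = 11 := by rw [hPdef, Nat.card_zpowers, hx₀]
  have hx₀1 : x₀ ≠ 1 := by
    intro h; rw [h, orderOf_one] at hx₀; norm_num at hx₀
  -- P is normal
  have hPnormal : P.Normal := by
    constructor
    intro n hn g
    have hmap : Subgroup.map ((MulAut.conj g).toMonoidHom) P = P := by
      apply aux_unique_card11 q hq hlt hcard _ hPcard
      rw [Nat.card_congr (Subgroup.equivMapOfInjective P _ (MulAut.conj g).injective).toEquiv.symm]
      exact hPcard
    rw [← hmap]
    exact ⟨n, hn, rfl⟩
  -- the commutator subgroup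
  have hcomm : Nat.card (commutator K) = 11 := by
    haveI : Fact q.Prime := ⟨hq⟩
    have : IsCyclic (K ⧸ P) := by
      apply isCyclic_of_prime_card (p := q)
      have h1 := Subgroup.card_eq_card_quotient_mul_card_subgroup P
      rw [hcard, hPcard] at h1
      omega
    letI : CommGroup (K ⧸ P) := this.commGroup
    have hle : commutator K ≤ P := by
      have := Abelianization.commutator_subset_ker (QuotientGroup.mk' P)
      rwa [QuotientGroup.ker_mk'] at this
    have hdvd : Nat.card (commutator K) ∣ 11 := hPcard ▸ Subgroup.card_dvd_of_le hle
    rcases (Nat.Prime.eq_one_or_self_of_dvd (by norm_num) _ hdvd) with h | h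
    · exfalso
      have hbot : commutator K = ⊥ := Subgroup.card_eq_one.mp h
      exact hnotp (by
        have : Subgroup.centralizer ({x₀} : Set K) = ⊤ := by
          rw [eq_top_iff]
          intro g _
          rw [Subgroup.mem_centralizer_iff]
          intro h hh
          rcases hh with rfl
          open commutatorElement in have : ⁅h, g⁆ ∈ commutator K :=
            Subgroup.commutator_mem_commutator (Subgroup.mem_top _) (Subgroup.mem_top _)
          rw [hbot, Subgroup.mem_bot] at this
          have := commutatorElement_eq_one_iff_mul_comm.mp this
          exact this
        have hp := hK x₀ hx₀1
        rwa [this, Subgroup.card_top] at hp)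
    · exact h
  refine ⟨?_, hcomm, hcenter⟩
  -- now count centralizers
  set f : K → Subgroup K := fun x => Subgroup.centralizer ({x} : Set K) with hfdef
  have hf1 : f 1 = ⊤ := by
    rw [eq_top_iff]
    intro g _
    rw [hfdef, Subgroup.mem_centralizer_iff]
    simp
  -- key: for x ≠ 1 in C ∈ image, C = f x
  have hkey : ∀ x : K, x ≠ 1 → ∀ C : Subgroup K, (Nat.card C).Prime → x ∈ C → f x = C := by
    intro x hx C hC hxC
    rw [hfdef]
    simp only
    rw [aux_centralizer_eq_zpowers hK hx]
    exact (aux_eq_zpowers_of_prime_card hC hx hxC).symm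
  set s : Finset K := Finset.univ.erase 1 with hsdef
  set t : Finset (Subgroup K) := s.image f with htdef
  have hscard : s.card = 11 * q - 1 := by
    rw [hsdef, Finset.card_erase_of_mem (Finset.mem_univ _), Finset.card_univ,
      ← Nat.card_eq_fintype_card, hcard]
  -- each C ∈ t has prime card
  have htprime : ∀ C ∈ t, (Nat.card C).Prime := by
    intro C hC
    rw [htdef] at hC
    obtain ⟨x, hxs, rfl⟩ := Finset.mem_image.mp hC
    have hx : x ≠ 1 := by
      rw [hsdef] at hxs
      exact (Finset.mem_erase.mp hxs).1
    exact hK x hx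
  -- fibers
  have hfiber : ∀ C ∈ t, {y ∈ s | f y = C} = {y ∈ s | y ∈ C} := by
    intro C hC
    have hCp := htprime C hC
    ext y
    simp only [Finset.mem_filter]
    constructor
    · rintro ⟨hys, rfl⟩
      refine ⟨hys, ?_⟩
      exact Subgroup.mem_centralizer_iff.mpr (by simp)
    · rintro ⟨hys, hyC⟩
      have hy : y ≠ 1 := by
        rw [hsdef] at hys
        exact (Finset.mem_erase.mp hys).1
      exact ⟨hys, hkey y hy C hCp hyC⟩
  have hfibercard : ∀ C ∈ t, {y ∈ s | f y = C}.card = Nat.card C - 1 := by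
    intro C hC
    rw [hfiber C hC]
    have : {y ∈ s | y ∈ C} = {y : K | y ∈ C}.toFinset.erase 1 := by
      ext y
      simp [hsdef, Finset.mem_erase, and_comm]
    rw [this, Finset.card_erase_of_mem (by simp [Subgroup.one_mem]), Set.toFinset_card]
    congr 1
    rw [Nat.card_eq_fintype_card]
    exact (Fintype.card_congr (Equiv.setCongr rfl)).symm
  -- the partition count
  have hsum : s.card = ∑ C ∈ t, {y ∈ s | f y = C}.card :=
    Finset.card_eq_sum_card_fiberwise (fun x hx => Finset.mem_image_of_mem f hx)
  -- P is in t, and is the unique element of card 11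
  have hPt : P ∈ t := by
    rw [htdef]
    refine Finset.mem_image.mpr ⟨x₀, ?_, ?_⟩
    · rw [hsdef]; exact Finset.mem_erase.mpr ⟨hx₀1, Finset.mem_univ _⟩
    · exact hkey x₀ hx₀1 P (by rw [hPcard]; norm_num) (Subgroup.mem_zpowers x₀)
  have ht11 : ∀ C ∈ t, Nat.card C = 11 → C = P := by
    intro C hC h11'
    exact aux_unique_card11 q hq hlt hcard h11' hPcard
  have htq : ∀ C ∈ t, C ≠ P → Nat.card C = q := by
    intro C hC hne
    have hCp := htprime C hC
    obtain ⟨x, hxs, rfl⟩ := Finset.mem_image.mp (htdef ▸ hC)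
    have hx : x ≠ 1 := by
      rw [hsdef] at hxs
      exact (Finset.mem_erase.mp hxs).1
    have : Nat.card (f x) = orderOf x := by
      rw [hfdef]; simp only; rw [aux_centralizer_eq_zpowers hK hx, Nat.card_zpowers]
    rcases horder x hx with h | h
    · exact absurd (ht11 _ hC (by rw [this, h])) hne
    · rw [this, h]
  -- split the sum
  have hsplit : ∑ C ∈ t, {y ∈ s | f y = C}.card
      = {y ∈ s | f y = P}.card + ∑ C ∈ t.erase P, {y ∈ s | f y = C}.card :=
    (Finset.add_sum_erase t _ hPt).symm
  have hsumq : ∑ C ∈ t.erase P, {y ∈ s | f y = C}.card = (t.erase P).card * (q - 1) := by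
    apply Finset.sum_const_nat
    intro C hC
    have hC' := Finset.mem_of_mem_erase hC
    have hne := (Finset.mem_erase.mp hC).1
    rw [hfibercard C hC', htq C hC' hne]
  have hPfiber : {y ∈ s | f y = P}.card = 10 := by
    rw [hfibercard P hPt, hPcard]
  -- conclude t.card
  have htot : 11 * q - 1 = 10 + (t.erase P).card * (q - 1) := by
    rw [← hscard, hsum, hsplit, hsumq, hPfiber]
  have htecard : (t.erase P).card = 11 := by
    have h1 : (t.erase P).card * (q - 1) = 11 * (q - 1) := by omega
    exact Nat.eq_of_mul_eq_mul_right (by omega) h1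
  have htcard : t.card = 12 := by
    rw [← Finset.insert_erase hPt, Finset.card_insert_of_notMem (Finset.notMem_erase _ _),
      htecard]
  -- finally numCent
  have himage : {H : Subgroup K | ∃ x : K, H = Subgroup.centralizer ({x} : Set K)}
      = ↑(insert ⊤ t : Finset (Subgroup K)) := by
    ext C
    simp only [Set.mem_setOf_eq, Finset.coe_insert, Set.mem_insert_iff, Finset.mem_coe]
    constructor
    · rintro ⟨x, rfl⟩
      by_cases hx : x = 1
      · left; rw [hx, ← hf1]
      · right
        rw [htdef]
        exact Finset.mem_image.mpr ⟨x, by rw [hsdef]; exact Finset.mem_erase.mpr ⟨hx, Finset.mem_univ _⟩, rfl⟩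
    · rintro (rfl | hC)
      · exact ⟨1, by rw [← hf1]⟩
      · obtain ⟨x, _, rfl⟩ := Finset.mem_image.mp (htdef ▸ hC)
        exact ⟨x, rfl⟩
  have hnottop : (⊤ : Subgroup K) ∉ t := by
    intro h
    have := htprime ⊤ h
    rw [Subgroup.card_top] at this
    exact hnotp this
  rw [numCent, himage, Set.ncard_coe_finset, Finset.card_insert_of_notMem hnottop, htcard]

end Aux

theorem stmt_14 (G H : Type*) [Group G] [Finite G] [Group H] [Finite H]
    (hG : IsCpoGroup G) (hH : IsCpoGroup H)
    (hGcard : Nat.card G = 55) (hHcard : Nat.card H = 22) :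
    numCent G = 13 ∧ numCent H = 13 ∧
      Nat.card (commutator G) = 11 ∧ Nat.card (commutator H) = 11 ∧
      ¬ Nonempty ((G ⧸ Subgroup.center G) ≃* (H ⧸ Subgroup.center H)) := by
  obtain ⟨hG1, hG2, hG3⟩ := aux_main G hG 5 (by norm_num) (by norm_num) (by omega)
  obtain ⟨hH1, hH2, hH3⟩ := aux_main H hH 2 (by norm_num) (by norm_num) (by omega)
  refine ⟨hG1, hH1, hG2, hH2, ?_⟩
  rintro ⟨e⟩
  have hcardG : Nat.card (G ⧸ Subgroup.center G) = 55 := by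
    rw [hG3]
    exact Subgroup.index_bot.trans hGcard
  have hcardH : Nat.card (H ⧸ Subgroup.center H) = 22 := by
    rw [hH3]
    exact Subgroup.index_bot.trans hHcard
  have := Nat.card_congr e.toEquiv
  rw [hcardG, hcardH] at this
  norm_num at this
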